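/- arXiv:1505.00703 — 2 statements merged into one kernel-verified Lean document; each statement's English description precedes it below -/
import Mathlib

section
/- (Maximum vertex based expansion.) Let 0 = p₀ < p₁ < ⋯ < p_r be integers. Let G be a graph on {1,…,r} for which the identity ordering is a GB ordering, and for each i = 1,…,r let G_i = (V_i,E_i) be a graph on V_i = {p_{i−1}+1,…,p_i} for which the natural (increasing) ordering of V_i is a GB ordering. Define the expanded graph G̃ on vertex set {1,…,p_r} by: (k,l) is an edge of G̃ if and only if either (k,l) ∈ E_i for some i, or k = p_i and l = p_j for some i ≠ j with (i,j) an edge of G. Then G̃ is a Generalized Bartlett graph, and the identity ordering on {1,…,p_r} is a GB ordering of G̃. -/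
open SimpleGraph

variable {V : Type*}

/-- One step of the elimination/triangulation process: at step `k` (0-based) the vertex with
label `k` is eliminated, and all pairs of its neighbours with larger labels are joined. -/
def triStep {n : ℕ} (σ : V ≃ Fin n) (H : SimpleGraph V) (k : ℕ) : SimpleGraph V where
  Adj u v := H.Adj u v ∨
    (u ≠ v ∧ ∃ hk : k < n, k < (σ u : ℕ) ∧ k < (σ v : ℕ) ∧
      H.Adj u (σ.symm ⟨k, hk⟩) ∧ H.Adj v (σ.symm ⟨k, hk⟩))
  symm := by
    constructor
    rintro u v (h | ⟨hne, hk, h1, h2, h3, h4⟩)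
    · exact Or.inl h.symm
    · exact Or.inr ⟨hne.symm, hk, h2, h1, h4, h3⟩
  loopless := by
    constructor
    rintro u (h | ⟨hne, _⟩)
    · exact H.loopless.irrefl u h
    · exact hne rfl

/-- The sequence of graphs `E_0, E_1, …` in the triangulation process. -/
def triSeq {n : ℕ} (σ : V ≃ Fin n) (G : SimpleGraph V) : ℕ → SimpleGraph V
  | 0 => G
  | k + 1 => triStep σ (triSeq σ G k) k

/-- The triangulation `D^σ(G)` of `G` under the ordering `σ` (`p − 2` elimination steps). -/
def triangulation {n : ℕ} (σ : V ≃ Fin n) (G : SimpleGraph V) : SimpleGraph V :=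
  triSeq σ G (n - 2)

/-- `σ` is a perfect elimination ordering of `G`: for every `j`, the vertex `σ⁻¹(j)` together
with its higher-labelled neighbours forms a clique. -/
def IsPerfectElimOrdering {n : ℕ} (σ : V ≃ Fin n) (G : SimpleGraph V) : Prop :=
  ∀ j : Fin n,
    G.IsClique ({σ.symm j} ∪ {v : V | (j : ℕ) < (σ v : ℕ) ∧ G.Adj v (σ.symm j)})

/-- A graph is decomposable (chordal) if it has no induced cycle of length `≥ 4`. -/
def IsDecomposable (G : SimpleGraph V) : Prop :=
  ∀ n : ℕ, 4 ≤ n → IsEmpty (SimpleGraph.cycleGraph n ↪g G)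

/-- `σ` is a Generalized Bartlett ordering of `G`: no triangle of `D^σ(G)` consists of three
non-edges of `G`. -/
def IsGBOrdering {n : ℕ} (σ : V ≃ Fin n) (G : SimpleGraph V) : Prop :=
  ¬ ∃ u v w : V,
      ¬ G.Adj u v ∧ ¬ G.Adj v w ∧ ¬ G.Adj u w ∧
      (triangulation σ G).Adj u v ∧ (triangulation σ G).Adj v w ∧
      (triangulation σ G).Adj u w

/-- `G` is a Generalized Bartlett graph: it admits a Generalized Bartlett ordering. -/
def IsGB (G : SimpleGraph V) : Prop :=
  ∃ (n : ℕ) (σ : V ≃ Fin n), IsGBOrdering σ G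

section AuxGB

variable {n : ℕ} (σ : V ≃ Fin n) (G : SimpleGraph V)

lemma triSeq_succ_adj (k : ℕ) (u v : V) : (triSeq σ G (k+1)).Adj u v ↔
    ((triSeq σ G k).Adj u v ∨ (u ≠ v ∧ ∃ hk : k < n, k < (σ u : ℕ) ∧ k < (σ v : ℕ) ∧
      (triSeq σ G k).Adj u (σ.symm ⟨k, hk⟩) ∧ (triSeq σ G k).Adj v (σ.symm ⟨k, hk⟩))) :=
  Iff.rfl

lemma triSeq_mono : Monotone (triSeq σ G) :=
  monotone_nat_of_le_succ (fun k u v h => ((triSeq_succ_adj σ G k u v).2 (Or.inl h)))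

lemma le_triSeq (k : ℕ) : G ≤ triSeq σ G k := triSeq_mono σ G (Nat.zero_le k)

lemma triSeq_adj_down : ∀ (m : ℕ) {x z : V}, (triSeq σ G m).Adj x z →
    (triSeq σ G (σ z : ℕ)).Adj x z := by
  intro m
  induction m with
  | zero => intro x z h; exact le_triSeq σ G _ h
  | succ m ih =>
    intro x z h
    rcases (triSeq_succ_adj σ G m x z).1 h with h' | ⟨hne, hk, h1, h2, h3, h4⟩
    · exact ih h'
    · exact triSeq_mono σ G h2 h

lemma triangulation_close {x y z : V} (hx : (triangulation σ G).Adj x z)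
    (hy : (triangulation σ G).Adj y z) (hne : x ≠ y)
    (hzx : (σ z : ℕ) < (σ x : ℕ)) (hzy : (σ z : ℕ) < (σ y : ℕ)) :
    (triangulation σ G).Adj x y := by
  have hxn : (σ x : ℕ) < n := (σ x).isLt
  have hyn : (σ y : ℕ) < n := (σ y).isLt
  have hxy : (σ x : ℕ) ≠ (σ y : ℕ) := fun h => hne (σ.injective (Fin.ext h))
  have hzn : (σ z : ℕ) + 1 ≤ n - 2 := by omega
  have hx' : (triSeq σ G (σ z : ℕ)).Adj x z := triSeq_adj_down σ G _ hx
  have hy' : (triSeq σ G (σ z : ℕ)).Adj y z := triSeq_adj_down σ G _ hy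
  have hk : (σ z : ℕ) < n := (σ z).isLt
  have hzz : σ.symm ⟨(σ z : ℕ), hk⟩ = z := by
    have : (⟨(σ z : ℕ), hk⟩ : Fin n) = σ z := rfl
    rw [this, Equiv.symm_apply_apply]
  have hnew : (triSeq σ G ((σ z : ℕ) + 1)).Adj x y := by
    refine (triSeq_succ_adj σ G _ x y).2 (Or.inr ⟨hne, hk, hzx, hzy, ?_, ?_⟩)
    · rw [hzz]; exact hx'
    · rw [hzz]; exact hy'
  exact triSeq_mono σ G hzn hnew

end AuxGB

/-- Maximum vertex based expansion: replacing each vertex `i` of a GB graph `G`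
on `{1,…,r}` (identity GB ordering) by a GB graph `Gi i` on the block `{p_{i−1}+1,…,p_i}`
(natural GB ordering), and joining the maximal vertices `p_i, p_j` of blocks `i ≠ j` exactly
when `(i,j)` is an edge of `G`, yields a Generalized Bartlett graph with the identity ordering
as a GB ordering. -/
theorem isGB_expanded_graph (r : ℕ) (P : ℕ → ℕ) (hP0 : P 0 = 0)
    (hPmono : ∀ i < r, P i < P (i + 1))
    (G : SimpleGraph (Fin r)) (hG : IsGBOrdering (Equiv.refl (Fin r)) G)
    (Gi : ∀ i : Fin r, SimpleGraph (Fin (P ((i : ℕ) + 1) - P (i : ℕ))))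
    (hGi : ∀ i : Fin r, IsGBOrdering (Equiv.refl (Fin (P ((i : ℕ) + 1) - P (i : ℕ)))) (Gi i))
    (Gexp : SimpleGraph (Fin (P r)))
    (hGexp : ∀ k l : Fin (P r), Gexp.Adj k l ↔
      ((∃ (i : Fin r) (a b : Fin (P ((i : ℕ) + 1) - P (i : ℕ))),
          (Gi i).Adj a b ∧ (k : ℕ) = P (i : ℕ) + (a : ℕ) ∧ (l : ℕ) = P (i : ℕ) + (b : ℕ)) ∨
       (∃ i j : Fin r, i ≠ j ∧ G.Adj i j ∧
          (k : ℕ) + 1 = P ((i : ℕ) + 1) ∧ (l : ℕ) + 1 = P ((j : ℕ) + 1)))) :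
    IsGBOrdering (Equiv.refl (Fin (P r))) Gexp ∧ IsGB Gexp := by
  classical
  -- monotonicity facts about P on [0, r]
  have hmono : ∀ i j : ℕ, i ≤ j → j ≤ r → P i ≤ P j := by
    intro i j hij hjr
    induction j with
    | zero =>
        have : i = 0 := by omega
        simp [this]
    | succ j ih =>
        rcases Nat.eq_or_lt_of_le hij with h | h
        · exact le_of_eq (congrArg P h)
        · have h1 := ih (by omega) (by omega)
          have h2 := hPmono j (by omega)
          omega
  have hstrict : ∀ i j : ℕ, i < j → j ≤ r → P i < P j := by
    intro i j hij hjr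
    obtain ⟨j', rfl⟩ : ∃ j', j = j' + 1 := ⟨j - 1, by omega⟩
    have h1 := hmono i j' (by omega) (by omega)
    have h2 := hPmono j' (by omega)
    omega
  -- injectivity of i ↦ P (i+1) on Fin r
  have hmaxinj : ∀ i j : Fin r, P ((i : ℕ) + 1) = P ((j : ℕ) + 1) → i = j := by
    intro i j h
    have hir := i.isLt
    have hjr := j.isLt
    apply Fin.ext
    by_contra hne
    rcases Nat.lt_or_ge (i : ℕ) (j : ℕ) with hlt | hge
    · exact absurd h (Nat.ne_of_lt (hstrict _ _ (by omega) (by omega)))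
    · exact absurd h.symm (Nat.ne_of_lt (hstrict _ _ (by omega) (by omega)))
  -- block uniqueness
  have hblockU : ∀ (i j : Fin r) (m : ℕ), P (i : ℕ) ≤ m → m < P ((i : ℕ) + 1) →
      P (j : ℕ) ≤ m → m < P ((j : ℕ) + 1) → i = j := by
    intro i j m h1 h2 h3 h4
    have hir := i.isLt
    have hjr := j.isLt
    apply Fin.ext
    by_contra hne
    rcases Nat.lt_or_ge (i : ℕ) (j : ℕ) with hlt | hge
    · have := hmono ((i : ℕ) + 1) (j : ℕ) (by omega) (by omega); omega
    · have := hmono ((j : ℕ) + 1) (i : ℕ) (by omega) (by omega); omega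
  -- a vertex lying in block i which is maximal (of block j) forces i = j
  have hmixb : ∀ (x : Fin (P r)) (i : Fin r) (a : Fin (P ((i : ℕ) + 1) - P (i : ℕ)))
      (j : Fin r), (x : ℕ) = P (i : ℕ) + (a : ℕ) → (x : ℕ) + 1 = P ((j : ℕ) + 1) → i = j := by
    intro x i a j hx hx1
    have hia := a.isLt
    have hii : P (i : ℕ) < P ((i : ℕ) + 1) := hPmono _ i.isLt
    have hjj : P (j : ℕ) < P ((j : ℕ) + 1) := hPmono _ j.isLt
    exact hblockU i j (x : ℕ) (by omega) (by omega) (by omega) (by omega)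
  -- the key invariant
  have INV : ∀ (m : ℕ) (u v : Fin (P r)),
      (triSeq (Equiv.refl (Fin (P r))) Gexp m).Adj u v →
      ((∃ (i : Fin r) (a b : Fin (P ((i : ℕ) + 1) - P (i : ℕ))),
          (triangulation (Equiv.refl _) (Gi i)).Adj a b ∧
          (u : ℕ) = P (i : ℕ) + (a : ℕ) ∧ (v : ℕ) = P (i : ℕ) + (b : ℕ)) ∨
       (∃ i j : Fin r, i ≠ j ∧ (triangulation (Equiv.refl _) G).Adj i j ∧
          (u : ℕ) + 1 = P ((i : ℕ) + 1) ∧ (v : ℕ) + 1 = P ((j : ℕ) + 1))) := by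
    intro m
    induction m with
    | zero =>
      intro u v h
      rcases (hGexp u v).1 h with ⟨i, a, b, hab, hu, hv⟩ | ⟨i, j, hij, hadj, hu, hv⟩
      · exact Or.inl ⟨i, a, b, le_triSeq _ _ _ hab, hu, hv⟩
      · exact Or.inr ⟨i, j, hij, le_triSeq _ _ _ hadj, hu, hv⟩
    | succ m ih =>
      intro u v h
      rcases (triSeq_succ_adj _ _ m u v).1 h with h' | ⟨hne, hk, h1, h2, h3, h4⟩
      · exact ih u v h'
      · -- the eliminated vertex z has label m
        set z : Fin (P r) := (Equiv.refl (Fin (P r))).symm ⟨m, hk⟩ with hzdef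
        have hz : (z : ℕ) = m := rfl
        have h1' : m < (u : ℕ) := h1
        have h2' : m < (v : ℕ) := h2
        have Du := ih u z h3
        have Dv := ih v z h4
        by_cases hmax : ∃ j : Fin r, m + 1 = P ((j : ℕ) + 1)
        · -- z is the maximal vertex of its block
          obtain ⟨j₀, hj₀⟩ := hmax
          have hj₀b : P (j₀ : ℕ) < P ((j₀ : ℕ) + 1) := hPmono _ j₀.isLt
          -- rule out the within-block case for both edges
          rcases Du with ⟨i, a, c, hac, hua, hzc⟩ | ⟨j, j', hjj', hDG, hu1, hz1⟩
          · exfalso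
            have hzc' : m = P (i : ℕ) + (c : ℕ) := hzc
            have hcl := c.isLt
            have hii : P (i : ℕ) < P ((i : ℕ) + 1) := hPmono _ i.isLt
            have hij₀ : i = j₀ :=
              hblockU i j₀ m (by omega) (by omega) (by omega) (by omega)
            have hal := a.isLt
            have hpe : P ((i : ℕ) + 1) = P ((j₀ : ℕ) + 1) := by rw [hij₀]
            omega
          · have hz1' : m + 1 = P ((j' : ℕ) + 1) := by
              have : (z : ℕ) + 1 = P ((j' : ℕ) + 1) := hz1
              omega
            have hj'j₀ : j' = j₀ := hmaxinj _ _ (hz1'.symm.trans hj₀)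
            rw [hj'j₀] at hDG
            rcases Dv with ⟨i2, b, c2, hbc, hvb, hzc2⟩ | ⟨l, l', hll', hDG2, hv1, hz2⟩
            · exfalso
              have hzc' : m = P (i2 : ℕ) + (c2 : ℕ) := hzc2
              have hcl := c2.isLt
              have hii : P (i2 : ℕ) < P ((i2 : ℕ) + 1) := hPmono _ i2.isLt
              have hij₀ : i2 = j₀ :=
                hblockU i2 j₀ m (by omega) (by omega) (by omega) (by omega)
              have hbl := b.isLt
              have hpe : P ((i2 : ℕ) + 1) = P ((j₀ : ℕ) + 1) := by rw [hij₀]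
              omega
            · have hz2' : m + 1 = P ((l' : ℕ) + 1) := by
                have : (z : ℕ) + 1 = P ((l' : ℕ) + 1) := hz2
                omega
              have hl'j₀ : l' = j₀ := hmaxinj _ _ (hz2'.symm.trans hj₀)
              rw [hl'j₀] at hDG2
              -- labels of j and l are above j₀
              have hjgt : (j₀ : ℕ) < (j : ℕ) := by
                by_contra hcon
                have := hmono ((j : ℕ) + 1) ((j₀ : ℕ) + 1) (by omega) (by omega)
                omega
              have hlgt : (j₀ : ℕ) < (l : ℕ) := by
                by_contra hcon
                have := hmono ((l : ℕ) + 1) ((j₀ : ℕ) + 1) (by omega) (by omega)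
                omega
              have hjl : j ≠ l := by
                intro hh
                apply hne
                apply Fin.ext
                rw [hh] at hu1
                omega
              exact Or.inr ⟨j, l, hjl,
                triangulation_close _ _ hDG hDG2 hjl hjgt hlgt, hu1, hv1⟩
        · -- z is not maximal: both edges are within-block
          rcases Du with ⟨i, a, c, hac, hua, hzc⟩ | ⟨j, j', hjj', hDG, hu1, hz1⟩
          swap
          · exact absurd ⟨j', by have : (z : ℕ) + 1 = P ((j' : ℕ) + 1) := hz1; omega⟩ hmax
          rcases Dv with ⟨i2, b, c2, hbc, hvb, hzc2⟩ | ⟨l, l', hll', hDG2, hv1, hz2⟩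
          swap
          · exact absurd ⟨l', by have : (z : ℕ) + 1 = P ((l' : ℕ) + 1) := hz2; omega⟩ hmax
          have hzc' : m = P (i : ℕ) + (c : ℕ) := hzc
          have hzc2' : m = P (i2 : ℕ) + (c2 : ℕ) := hzc2
          have hcl := c.isLt
          have hc2l := c2.isLt
          have hii : P (i : ℕ) < P ((i : ℕ) + 1) := hPmono _ i.isLt
          have hii2 : P (i2 : ℕ) < P ((i2 : ℕ) + 1) := hPmono _ i2.isLt
          have hie : i2 = i :=
            hblockU i2 i m (by omega) (by omega) (by omega) (by omega)
          subst hie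
          have hce : c2 = c := Fin.ext (by omega)
          subst hce
          have hab : a ≠ b := by
            intro hh
            apply hne
            apply Fin.ext
            rw [hh] at hua
            omega
          have hca : (c2 : ℕ) < (a : ℕ) := by omega
          have hcb : (c2 : ℕ) < (b : ℕ) := by omega
          exact Or.inl ⟨i2, a, b,
            triangulation_close _ _ hac hbc hab hca hcb, hua, hvb⟩
  -- transfer of non-adjacency
  have hnotGi : ∀ (x y : Fin (P r)) (i : Fin r) (a b : Fin (P ((i : ℕ) + 1) - P (i : ℕ))),
      ¬ Gexp.Adj x y → (x : ℕ) = P (i : ℕ) + (a : ℕ) → (y : ℕ) = P (i : ℕ) + (b : ℕ) →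
      ¬ (Gi i).Adj a b := by
    intro x y i a b hn hx hy hadj
    exact hn ((hGexp x y).2 (Or.inl ⟨i, a, b, hadj, hx, hy⟩))
  have hnotG : ∀ (x y : Fin (P r)) (i j : Fin r), ¬ Gexp.Adj x y → i ≠ j →
      (x : ℕ) + 1 = P ((i : ℕ) + 1) → (y : ℕ) + 1 = P ((j : ℕ) + 1) → ¬ G.Adj i j := by
    intro x y i j hn hij hx hy hadj
    exact hn ((hGexp x y).2 (Or.inr ⟨i, j, hij, hadj, hx, hy⟩))
  have main : IsGBOrdering (Equiv.refl (Fin (P r))) Gexp := by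
    rintro ⟨u, v, w, g1, g2, g3, d1, d2, d3⟩
    have Duv := INV (P r - 2) u v d1
    have Dvw := INV (P r - 2) v w d2
    have Duw := INV (P r - 2) u w d3
    rcases Duv with ⟨i1, a1, b1, hA1, hu1, hv1⟩ | ⟨j1, l1, hne1, hD1, hu1, hv1⟩
    · rcases Dvw with ⟨i2, b2, c2, hA2, hv2, hw2⟩ | ⟨j2, l2, hne2, hD2, hv2, hw2⟩
      · -- v lies in blocks i1 and i2
        have hb1 := b1.isLt
        have hb2 := b2.isLt
        have hii1 : P (i1 : ℕ) < P ((i1 : ℕ) + 1) := hPmono _ i1.isLt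
        have hii2 : P (i2 : ℕ) < P ((i2 : ℕ) + 1) := hPmono _ i2.isLt
        have hie : i2 = i1 :=
          hblockU i2 i1 (v : ℕ) (by omega) (by omega) (by omega) (by omega)
        subst hie
        rcases Duw with ⟨i3, a3, c3, hA3, hu3, hw3⟩ | ⟨j3, l3, hne3, hD3, hu3, hw3⟩
        · have ha1 := a1.isLt
          have ha3 := a3.isLt
          have hii3 : P (i3 : ℕ) < P ((i3 : ℕ) + 1) := hPmono _ i3.isLt
          have hie2 : i3 = i2 :=
            hblockU i3 i2 (u : ℕ) (by omega) (by omega) (by omega) (by omega)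
          subst hie2
          have hbe : b2 = b1 := Fin.ext (by omega)
          subst hbe
          have hae : a3 = a1 := Fin.ext (by omega)
          subst hae
          have hce : c3 = c2 := Fin.ext (by omega)
          subst hce
          exact hGi i3 ⟨a3, b2, c3,
            hnotGi u v i3 a3 b2 g1 hu1 hv1,
            hnotGi v w i3 b2 c3 g2 hv1 hw2,
            hnotGi u w i3 a3 c3 g3 hu1 hw2,
            hA1, hA2, hA3⟩
        · have e1 : i2 = j3 := hmixb u i2 a1 j3 hu1 hu3
          have e2 : i2 = l3 := hmixb w i2 c2 l3 hw2 hw3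
          exact hne3 (e1.symm.trans e2)
      · -- vw is max-max, uv within block i1 : v is maximal of block i1
        have e1 : i1 = j2 := hmixb v i1 b1 j2 hv1 hv2
        rcases Duw with ⟨i3, a3, c3, hA3, hu3, hw3⟩ | ⟨j3, l3, hne3, hD3, hu3, hw3⟩
        · have e2 : i3 = l2 := hmixb w i3 c3 l2 hw3 hw2
          have ha1 := a1.isLt
          have ha3 := a3.isLt
          have hii1 : P (i1 : ℕ) < P ((i1 : ℕ) + 1) := hPmono _ i1.isLt
          have hii3 : P (i3 : ℕ) < P ((i3 : ℕ) + 1) := hPmono _ i3.isLt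
          have e3 : i1 = i3 :=
            hblockU i1 i3 (u : ℕ) (by omega) (by omega) (by omega) (by omega)
          exact hne2 (e1.symm.trans (e3.trans e2))
        · have e2 : i1 = j3 := hmixb u i1 a1 j3 hu1 hu3
          apply d1.ne
          apply Fin.ext
          have hpe : P ((j3 : ℕ) + 1) = P ((j2 : ℕ) + 1) := by rw [← e2, e1]
          omega
    · -- uv is max-max
      rcases Dvw with ⟨i2, b2, c2, hA2, hv2, hw2⟩ | ⟨j2, l2, hne2, hD2, hv2, hw2⟩
      · have e1 : i2 = l1 := hmixb v i2 b2 l1 hv2 hv1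
        rcases Duw with ⟨i3, a3, c3, hA3, hu3, hw3⟩ | ⟨j3, l3, hne3, hD3, hu3, hw3⟩
        · have e2 : i3 = j1 := hmixb u i3 a3 j1 hu3 hu1
          have hc2 := c2.isLt
          have hc3 := c3.isLt
          have hii2 : P (i2 : ℕ) < P ((i2 : ℕ) + 1) := hPmono _ i2.isLt
          have hii3 : P (i3 : ℕ) < P ((i3 : ℕ) + 1) := hPmono _ i3.isLt
          have e3 : i2 = i3 :=
            hblockU i2 i3 (w : ℕ) (by omega) (by omega) (by omega) (by omega)
          exact hne1 (e2.symm.trans (e3.symm.trans e1))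
        · have e2 : i2 = l3 := hmixb w i2 c2 l3 hw2 hw3
          apply d2.ne
          apply Fin.ext
          have hpe : P ((l1 : ℕ) + 1) = P ((l3 : ℕ) + 1) := by rw [← e1, e2]
          omega
      · -- both vw and uv are max-max
        have e1 : j2 = l1 := hmaxinj _ _ (hv2.symm.trans hv1)
        rcases Duw with ⟨i3, a3, c3, hA3, hu3, hw3⟩ | ⟨j3, l3, hne3, hD3, hu3, hw3⟩
        · have e2 : i3 = j1 := hmixb u i3 a3 j1 hu3 hu1
          have e3 : i3 = l2 := hmixb w i3 c3 l2 hw3 hw2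
          apply d3.ne
          apply Fin.ext
          have hpe : P ((j1 : ℕ) + 1) = P ((l2 : ℕ) + 1) := by rw [← e2, ← e3]
          omega
        · have e2 : j3 = j1 := hmaxinj _ _ (hu3.symm.trans hu1)
          have e3 : l3 = l2 := hmaxinj _ _ (hw3.symm.trans hw2)
          subst e1; subst e2; subst e3
          exact hG ⟨j3, j2, l3,
            hnotG u v j3 j2 g1 hne1 hu1 hv1,
            hnotG v w j2 l3 g2 hne2 hv1 hw2,
            hnotG u w j3 l3 g3 hne3 hu1 hw2,
            hD1, hD2, hD3⟩
  exact ⟨main, P r, Equiv.refl _, main⟩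
end

section
/- (Fill-in pattern of the modified Cholesky factor equals the triangulation.) Let G be a graph on {1,…,p} with edge set E and let D(E) = D^{id}(E) be the triangulation of E under the identity ordering. For every i > j with (i,j) ∉ E, the dependent entry L_{ij}, viewed as a function of (L_I, D) on ℝ^m × (0,∞)^p, is NOT identically zero if and only if (i,j) ∈ D(E). Equivalently, L_{ij} ≡ 0 as a function of (L_I,D) if and only if (i,j) ∉ D(E). -/
open SimpleGraph

variable {V : Type*}

open scoped Classical BigOperators

/-- Column `j` (as a natural number), row `i`, of the modified Cholesky factor `L(L_I, D)`. -/
noncomputable def cholCol (p : ℕ) (G : SimpleGraph (Fin p)) (ℓ : Fin p → Fin p → ℝ)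
    (D : Fin p → ℝ) : ℕ → Fin p → ℝ
  | j => fun i =>
    if hj : j < p then
      if (i : ℕ) = j then 1
      else if (i : ℕ) < j then 0
      else if G.Adj i ⟨j, hj⟩ then ℓ i ⟨j, hj⟩
      else -(∑ k ∈ (Finset.range j).attach,
          cholCol p G ℓ D k.1 i * cholCol p G ℓ D k.1 ⟨j, hj⟩ *
            D ⟨k.1, (Finset.mem_range.mp k.2).trans hj⟩) / D ⟨j, hj⟩
    else 0
termination_by j => j
decreasing_by all_goals exact Finset.mem_range.mp k.2

section Lems
variable {p : ℕ} {G : SimpleGraph (Fin p)}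

lemma triSeq_mono_s16 {a b : ℕ} (h : a ≤ b) {u v : Fin p}
    (hadj : (triSeq (Equiv.refl (Fin p)) G a).Adj u v) :
    (triSeq (Equiv.refl (Fin p)) G b).Adj u v := by
  induction b, h using Nat.le_induction with
  | base => exact hadj
  | succ b hb ih => exact Or.inl ih

lemma exists_step {j : ℕ} {u v : Fin p}
    (h : (triSeq (Equiv.refl (Fin p)) G j).Adj u v) (hG : ¬ G.Adj u v) :
    ∃ k, ∃ hk : k < p, k < j ∧ k < (u : ℕ) ∧ k < (v : ℕ) ∧
      (triSeq (Equiv.refl (Fin p)) G k).Adj u ⟨k, hk⟩ ∧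
      (triSeq (Equiv.refl (Fin p)) G k).Adj v ⟨k, hk⟩ := by
  induction j with
  | zero => exact absurd h hG
  | succ j ih =>
    rcases h with h | ⟨hne, hk, h1, h2, h3, h4⟩
    · obtain ⟨k, hk, h1, rest⟩ := ih h
      exact ⟨k, hk, h1.trans (Nat.lt_succ_self j), rest⟩
    · exact ⟨j, hk, Nat.lt_succ_self j, h1, h2, h3, h4⟩

lemma adj_down {k : ℕ} {u v : Fin p} (hv : (v : ℕ) ≤ k)
    (h : (triSeq (Equiv.refl (Fin p)) G k).Adj u v) :
    (triSeq (Equiv.refl (Fin p)) G (v : ℕ)).Adj u v := by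
  induction k with
  | zero => exact (Nat.le_zero.mp hv) ▸ h
  | succ k ih =>
    by_cases hv' : (v : ℕ) ≤ k
    · apply ih hv'
      rcases h with h | ⟨_, _, _, h2, _⟩
      · exact h
      · simp only [Equiv.refl_apply] at *; omega
    · have : (v : ℕ) = k + 1 := by omega
      rw [this]; exact h

/-- If both `u` and `v` (with labels `> k`) are adjacent to `k` in `E k`, then `(u,v) ∈ E (k+1)`. -/
lemma step_fill {k : ℕ} (hk : k < p) {u v : Fin p} (hne : u ≠ v)
    (hu : k < (u : ℕ)) (hv : k < (v : ℕ))
    (h1 : (triSeq (Equiv.refl (Fin p)) G k).Adj u ⟨k, hk⟩)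
    (h2 : (triSeq (Equiv.refl (Fin p)) G k).Adj v ⟨k, hk⟩) :
    (triSeq (Equiv.refl (Fin p)) G (k + 1)).Adj u v :=
  Or.inr ⟨hne, hk, hu, hv, h1, h2⟩

lemma chol_zero (ℓ : Fin p → Fin p → ℝ) (D : Fin p → ℝ) :
    ∀ j, ∀ hj : j < p, ∀ i : Fin p, j < (i : ℕ) →
      ¬ (triSeq (Equiv.refl (Fin p)) G j).Adj i ⟨j, hj⟩ →
      cholCol p G ℓ D j i = 0 := by
  intro j
  induction j using Nat.strong_induction_on with
  | _ j ih =>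
    intro hj i hji hadj
    rw [cholCol]; beta_reduce
    rw [dif_pos hj, if_neg (by (try simp only [Fin.val_mk]); omega), if_neg (by (try simp only [Fin.val_mk]); omega),
        if_neg (show ¬ G.Adj i ⟨j, hj⟩ from fun h => hadj (triSeq_mono_s16 (Nat.zero_le j) h))]
    have hsum : (∑ k ∈ (Finset.range j).attach,
        cholCol p G ℓ D k.1 i * cholCol p G ℓ D k.1 ⟨j, hj⟩ *
          D ⟨k.1, (Finset.mem_range.mp k.2).trans hj⟩) = 0 := by
      apply Finset.sum_eq_zero
      intro k _
      have hkj : k.1 < j := Finset.mem_range.mp k.2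
      have hkp : k.1 < p := hkj.trans hj
      have : ¬ ((triSeq (Equiv.refl (Fin p)) G k.1).Adj i ⟨k.1, hkp⟩ ∧
          (triSeq (Equiv.refl (Fin p)) G k.1).Adj ⟨j, hj⟩ ⟨k.1, hkp⟩) := by
        rintro ⟨ha, hb⟩
        exact hadj (triSeq_mono_s16 hkj (step_fill hkp
          (by simp only [ne_eq, Fin.ext_iff, Fin.val_mk]; omega) (by (try simp only [Fin.val_mk]); omega) (by (try simp only [Fin.val_mk]); omega) ha hb))
      rcases not_and_or.mp this with h | h
      · rw [ih k.1 hkj hkp i (by (try simp only [Fin.val_mk]); omega) h]; ring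
      · rw [ih k.1 hkj hkp ⟨j, hj⟩ (by (try simp only [Fin.val_mk]); omega) h]; ring
    rw [hsum]
    simp

lemma chol_neg :
    ∀ j, ∀ hj : j < p, ∀ i : Fin p, j < (i : ℕ) →
      (triSeq (Equiv.refl (Fin p)) G j).Adj i ⟨j, hj⟩ →
      cholCol p G (fun _ _ => (-1 : ℝ)) (fun _ => (1 : ℝ)) j i ≤ -1 := by
  intro j
  induction j using Nat.strong_induction_on with
  | _ j ih =>
    intro hj i hji hadj
    rw [cholCol]; beta_reduce
    rw [dif_pos hj, if_neg (by (try simp only [Fin.val_mk]); omega), if_neg (by (try simp only [Fin.val_mk]); omega)]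
    by_cases hG : G.Adj i ⟨j, hj⟩
    · rw [if_pos hG]
    · rw [if_neg hG]
      have key : ∀ k (hkj : k < j),
          (cholCol p G (fun _ _ => (-1:ℝ)) (fun _ => (1:ℝ)) k i *
            cholCol p G (fun _ _ => (-1:ℝ)) (fun _ => (1:ℝ)) k ⟨j, hj⟩ = 0) ∨
          (1 ≤ cholCol p G (fun _ _ => (-1:ℝ)) (fun _ => (1:ℝ)) k i *
            cholCol p G (fun _ _ => (-1:ℝ)) (fun _ => (1:ℝ)) k ⟨j, hj⟩) := by
        intro k hkj
        have hkp : k < p := hkj.trans hj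
        by_cases ha : (triSeq (Equiv.refl (Fin p)) G k).Adj i ⟨k, hkp⟩
        · by_cases hb : (triSeq (Equiv.refl (Fin p)) G k).Adj ⟨j, hj⟩ ⟨k, hkp⟩
          · right
            have h1 := ih k hkj hkp i (by (try simp only [Fin.val_mk]); omega) ha
            have h2 := ih k hkj hkp ⟨j, hj⟩ (by (try simp only [Fin.val_mk]); omega) hb
            nlinarith
          · left; rw [chol_zero _ _ k hkp ⟨j, hj⟩ (by (try simp only [Fin.val_mk]); omega) hb]; ring
        · left; rw [chol_zero _ _ k hkp i (by (try simp only [Fin.val_mk]); omega) ha]; ring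
      obtain ⟨k0, hk0p, hk0j, hk0i, hk0v, ha0, hb0⟩ := exists_step hadj hG
      simp only [Fin.val_mk] at hk0v ha0 hb0 hk0j
      have hk0j' : k0 < j := hk0v
      have hterm1 : (1:ℝ) ≤ cholCol p G (fun _ _ => (-1:ℝ)) (fun _ => (1:ℝ)) k0 i *
            cholCol p G (fun _ _ => (-1:ℝ)) (fun _ => (1:ℝ)) k0 ⟨j, hj⟩ := by
        have h1 := ih k0 hk0j' hk0p i (by (try simp only [Fin.val_mk]); omega) ha0
        have h2 := ih k0 hk0j' hk0p ⟨j, hj⟩ (by (try simp only [Fin.val_mk]); omega) hb0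
        nlinarith
      have hsum : (1:ℝ) ≤ ∑ k ∈ (Finset.range j).attach,
          cholCol p G (fun _ _ => (-1:ℝ)) (fun _ => (1:ℝ)) k.1 i *
            cholCol p G (fun _ _ => (-1:ℝ)) (fun _ => (1:ℝ)) k.1 ⟨j, hj⟩ * 1 := by
        have hmem : (⟨k0, Finset.mem_range.mpr hk0j'⟩ : {x // x ∈ Finset.range j}) ∈
            (Finset.range j).attach := Finset.mem_attach _ _
        calc (1:ℝ) ≤ cholCol p G (fun _ _ => (-1:ℝ)) (fun _ => (1:ℝ)) k0 i *
            cholCol p G (fun _ _ => (-1:ℝ)) (fun _ => (1:ℝ)) k0 ⟨j, hj⟩ * 1 := by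
              rw [mul_one]; exact hterm1
          _ ≤ _ := by
              apply Finset.single_le_sum (f := fun k : {x // x ∈ Finset.range j} =>
                cholCol p G (fun _ _ => (-1:ℝ)) (fun _ => (1:ℝ)) k.1 i *
                  cholCol p G (fun _ _ => (-1:ℝ)) (fun _ => (1:ℝ)) k.1 ⟨j, hj⟩ * 1) ?_ hmem
              intro k _
              beta_reduce
              rw [mul_one]
              rcases key k.1 (Finset.mem_range.mp k.2) with h | h
              · rw [h]
              · linarith
      rw [div_one]
      linarith [hsum]

end Lems

/-- fill-in pattern of the modified Cholesky factor equals the triangulation.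
For `i > j` with `(i,j) ∉ E`, the dependent entry `L_{ij}` is not identically zero as a
function of `(L_I, D)` on `ℝ^m × (0,∞)^p` if and only if `(i,j) ∈ D^{id}(E)`. -/
theorem cholesky_fillin_iff_mem_triangulation (p : ℕ) (G : SimpleGraph (Fin p)) :
    ∀ i j : Fin p, j < i → ¬ G.Adj i j →
      ((∃ (ℓ : Fin p → Fin p → ℝ) (D : Fin p → ℝ),
          (∀ k, 0 < D k) ∧ cholCol p G ℓ D (j : ℕ) i ≠ 0) ↔
        (triangulation (Equiv.refl (Fin p)) G).Adj i j) := by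
  intro i j hji hG
  have hjp : (j : ℕ) < p := j.isLt
  have hip : (i : ℕ) < p := i.isLt
  have hji' : (j : ℕ) < (i : ℕ) := hji
  have hj2 : (j : ℕ) ≤ p - 2 := by omega
  have hj : (⟨(j : ℕ), hjp⟩ : Fin p) = j := rfl
  constructor
  · rintro ⟨ℓ, D, hD, hne⟩
    by_contra htri
    apply hne
    apply chol_zero ℓ D (j : ℕ) hjp i hji'
    rw [hj]
    intro h
    exact htri (triSeq_mono_s16 hj2 h)
  · intro htri
    refine ⟨fun _ _ => -1, fun _ => 1, fun _ => one_pos, ?_⟩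
    have h1 : (triSeq (Equiv.refl (Fin p)) G (j : ℕ)).Adj i j := adj_down hj2 htri
    have h2 := chol_neg (j : ℕ) hjp i hji' (by rw [hj]; exact h1)
    intro h0
    rw [h0] at h2
    norm_num at h2
end
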